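/- Let b ≥ 2 and let D be a finite set of nonnegative integers. Suppose B is a finite set of vertices of the Protasov tree of b such that every infinite path of the tree meets B in at least one vertex, and such that P_D(e^{2πi m/b^k}) = 0 for every (k,m) ∈ B. Then D satisfies the Kenyon condition with respect to b: for every integer m ≥ 1 there exists k ≥ 1 with P_D(e^{2πi m/b^k}) = 0. -/

import Mathlib

open Polynomial

/-- The mask polynomial `P_A(X) = ∑_{a ∈ A} X^a ∈ ℤ[X]` of a finite set of naturals. -/
noncomputable def mask (A : Finset ℕ) : Polynomial ℤ := ∑ a ∈ A, X ^ a

/-- The Kenyon condition with respect to `b`. -/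
def Kenyon (b : ℕ) (D : Finset ℕ) : Prop :=
  ∀ m : ℕ, 1 ≤ m → ∃ k : ℕ, 1 ≤ k ∧
    Polynomial.aeval (Complex.exp (2 * Real.pi * Complex.I * (m : ℂ) / (b : ℂ) ^ k)) (mask D) = 0

/-- `(k, m)` is a vertex of the Protasov tree of `b`: `k ≥ 1`, `1 ≤ m < b^k`, `b ∤ m`. -/
def IsVertex (b : ℕ) (v : ℕ × ℕ) : Prop :=
  1 ≤ v.1 ∧ 1 ≤ v.2 ∧ v.2 < b ^ v.1 ∧ ¬ b ∣ v.2

/-- `m` (evaluated for indices `k ≥ 1`) is an infinite path in the Protasov tree of `b`: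
`1 ≤ m₁ ≤ b - 1`, `1 ≤ m_{k+1} < b^{k+1}` and `m_{k+1} ≡ m_k (mod b^k)`. -/
def IsPath (b : ℕ) (m : ℕ → ℕ) : Prop :=
  (1 ≤ m 1 ∧ m 1 ≤ b - 1) ∧
    ∀ k : ℕ, 1 ≤ k → 1 ≤ m (k + 1) ∧ m (k + 1) < b ^ (k + 1) ∧ m (k + 1) ≡ m k [MOD b ^ k]

/-- If a finite set `B` of vertices of the Protasov tree meets every infinite path at least
once and `P_D(e^{2πi m / b^k}) = 0` for all `(k, m) ∈ B`, then `D` satisfies the Kenyon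
condition. -/

private lemma exp_mod (b k m : ℕ) (hb : 2 ≤ b) :
    Complex.exp (2 * Real.pi * Complex.I * (m : ℂ) / (b : ℂ) ^ k) =
      Complex.exp (2 * Real.pi * Complex.I * ((m % b ^ k : ℕ) : ℂ) / (b : ℂ) ^ k) := by
  have hb0 : (b : ℂ) ≠ 0 := by exact_mod_cast (by omega : b ≠ 0)
  have hbk : ((b : ℂ)) ^ k ≠ 0 := pow_ne_zero _ hb0
  have hm : (m : ℂ) = (b : ℂ) ^ k * ((m / b ^ k : ℕ) : ℂ) + ((m % b ^ k : ℕ) : ℂ) := by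
    exact_mod_cast (Nat.div_add_mod m (b ^ k)).symm
  have : 2 * (Real.pi : ℂ) * Complex.I * (m : ℂ) / (b : ℂ) ^ k =
      2 * (Real.pi : ℂ) * Complex.I * ((m % b ^ k : ℕ) : ℂ) / (b : ℂ) ^ k +
        ((m / b ^ k : ℕ) : ℂ) * (2 * Real.pi * Complex.I) := by
    rw [hm]; field_simp; ring
  rw [this, Complex.exp_add, Complex.exp_nat_mul_two_pi_mul_I, mul_one]

theorem stmt10 (b : ℕ) (hb : 2 ≤ b) (D : Finset ℕ) (B : Finset (ℕ × ℕ))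
    (hBv : ∀ v ∈ B, IsVertex b v)
    (hBblock : ∀ m : ℕ → ℕ, IsPath b m → ∃ k : ℕ, 1 ≤ k ∧ (k, m k) ∈ B)
    (hBzero : ∀ v ∈ B, Polynomial.aeval
      (Complex.exp (2 * Real.pi * Complex.I * (v.2 : ℂ) / (b : ℂ) ^ v.1)) (mask D) = 0) :
    Kenyon b D := by
  have hb0 : (b : ℂ) ≠ 0 := by
    have : 0 < b := lt_of_lt_of_le two_pos hb
    exact_mod_cast this.ne'
  intro m
  induction m using Nat.strong_induction_on with
  | _ m ih =>
    intro hm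
    by_cases hdvd : b ∣ m
    · obtain ⟨m', rfl⟩ := hdvd
      have hm' : 1 ≤ m' := by
        rcases Nat.eq_zero_or_pos m' with h | h
        · simp [h] at hm
        · exact h
      have hlt : m' < b * m' := by nlinarith
      obtain ⟨k, hk, hz⟩ := ih m' hlt hm'
      refine ⟨k + 1, by omega, ?_⟩
      have heq : (2 * Real.pi * Complex.I * ((b * m' : ℕ) : ℂ) / (b : ℂ) ^ (k + 1)) =
          (2 * Real.pi * Complex.I * (m' : ℂ) / (b : ℂ) ^ k) := by
        push_cast
        field_simp
        ring
      rw [heq]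
      exact hz
    · set p : ℕ → ℕ := fun j => m % b ^ j with hp
      have hpath : IsPath b p := by
        constructor
        · constructor
          · have : m % b ≠ 0 := fun h => hdvd (Nat.dvd_of_mod_eq_zero h)
            simp only [hp, pow_one]
            omega
          · have : m % b < b := Nat.mod_lt _ (by omega)
            simp only [hp, pow_one]
            omega
        · intro k hk
          refine ⟨?_, ?_, ?_⟩
          · have hnd : ¬ b ^ (k + 1) ∣ m := fun h =>
              hdvd (dvd_trans (dvd_pow_self b (by omega)) h)
            have : m % b ^ (k + 1) ≠ 0 := fun h => hnd (Nat.dvd_of_mod_eq_zero h)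
            simp only [hp]
            omega
          · exact Nat.mod_lt _ (Nat.pow_pos (by omega))
          · show m % b ^ (k + 1) ≡ m % b ^ k [MOD b ^ k]
            unfold Nat.ModEq
            rw [Nat.mod_mod_of_dvd _ (pow_dvd_pow b (by omega))]
            exact (Nat.mod_mod_of_dvd m dvd_rfl).symm
      obtain ⟨k, hk, hkB⟩ := hBblock p hpath
      refine ⟨k, hk, ?_⟩
      have := hBzero _ hkB
      simp only [hp] at this
      rw [exp_mod b k m hb]
      exact this
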